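/- Jacobi's identity: as formal power series, (∏_{i≥1}(1-q^i))^3 = ∑_{n≥0} (−1)^n (2n+1) q^{n(n+1)/2}. -/

import Mathlib

noncomputable def fps (k : ℕ) : PowerSeries ℤ :=
  PowerSeries.mk fun n =>
    PowerSeries.coeff (R := ℤ) n (∏ i ∈ Finset.range (n+1), (1 - PowerSeries.X ^ (k*(i+1))))

open Finset
namespace Jac
noncomputable def q : PowerSeries ℤ := PowerSeries.X

noncomputable def G : ℕ → ℕ → PowerSeries ℤ
  | 0, 0 => 1
  | 0, _+1 => 0
  | _+1, 0 => 1
  | m+1, k+1 => G m (k+1) + q ^ (m - k) * G m k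

lemma G_zero (m) : G m 0 = 1 := by cases m <;> rfl

lemma G_eq_zero : ∀ m k, m < k → G m k = 0 := by
  intro m
  induction m with
  | zero => intro k h; match k, h with | k+1, _ => rfl
  | succ m ih =>
    intro k h
    match k, h with
    | k+1, h =>
      show G m (k+1) + q ^ (m - k) * G m k = 0
      rw [ih (k+1) (by omega), ih k (by omega), mul_zero, add_zero]

lemma G_diag (m) : G m m = 1 := by
  induction m with
  | zero => rfl
  | succ m ih =>
    show G m (m+1) + q ^ (m - m) * G m m = 1
    rw [G_eq_zero m (m+1) (by omega), ih]; simp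

lemma ruleA (m k) : G (m+1) (k+1) = G m (k+1) + q ^ (m - k) * G m k := rfl

lemma ruleB (m k) : G (m+1) (k+1) = q ^ (k+1) * G m (k+1) + G m k := by
  induction m generalizing k with
  | zero =>
    cases k with
    | zero => show G 0 1 + q ^ 0 * G 0 0 = _; simp [G]
    | succ k => show G 0 (k+2) + q ^ (0 - (k+1)) * G 0 (k+1) = _; simp [G]
  | succ m ih =>
    cases k with
    | zero =>
      calc G (m+2) 1 = G (m+1) 1 + q ^ (m+1-0) * G (m+1) 0 := ruleA (m+1) 0
        _ = (q ^ 1 * G m 1 + G m 0) + q ^ (m+1) * G (m+1) 0 := by rw [ih 0]; norm_num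
        _ = q ^ 1 * (G m 1 + q ^ (m - 0) * G m 0) + G (m+1) 0 := by
              simp only [G_zero, Nat.sub_zero, mul_one]
              rw [pow_succ']; ring
        _ = q ^ (0+1) * G (m+1) (0+1) + G (m+1) 0 := by rw [← ruleA m 0]
    | succ k =>
      calc G (m+2) (k+2) = G (m+1) (k+2) + q ^ (m+1-(k+1)) * G (m+1) (k+1) := ruleA (m+1) (k+1)
        _ = (q ^ (k+2) * G m (k+2) + G m (k+1)) + q ^ (m-k) * (q ^ (k+1) * G m (k+1) + G m k) := by
              have e : m+1-(k+1) = m-k := by omega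
              rw [e, ih (k+1), ih k]
        _ = q ^ (k+2) * (G m (k+2) + q ^ (m-(k+1)) * G m (k+1)) + (G m (k+1) + q ^ (m-k) * G m k) := by
              by_cases h : k + 1 ≤ m
              · have hp : q^(m-k) * q^(k+1) = q^(k+2) * q^(m-(k+1)) := by
                  rw [← pow_add, ← pow_add]; congr 1; omega
                linear_combination (G m (k+1)) * hp
              · rw [G_eq_zero m (k+1) (by omega), G_eq_zero m (k+2) (by omega)]
                ring
        _ = q ^ (k+1+1) * G (m+1) (k+1+1) + G (m+1) (k+1) := by rw [← ruleA m (k+1), ← ruleA m k]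

lemma absorb (m k) : (q ^ (k+1) - 1) * G (m+1) (k+1) = (q ^ (m+1) - 1) * G m k := by
  by_cases h : k ≤ m
  · have h1 : (q^(k+1) - 1) * G (m+1) (k+1)
        = q^(k+1) * G (m+1) (k+1) - G (m+1) (k+1) := by ring
    rw [h1]
    nth_rewrite 1 [ruleA m k]
    rw [ruleB m k]
    have hp : q^(k+1) * q^(m-k) = q^(m+1) := by rw [← pow_add]; congr 1; omega
    linear_combination (G m k) * hp
  · rw [G_eq_zero m k (by omega), G_eq_zero (m+1) (k+1) (by omega)]
    ring

lemma prodG : ∀ k m, k ≤ m →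
    G m k * ∏ i ∈ range k, (1 - q ^ (i+1)) = ∏ i ∈ range k, (1 - q ^ (m - k + i + 1)) := by
  intro k
  induction k with
  | zero => intro m _; simp [G_zero]
  | succ k ih =>
    intro m hm
    match m, hm with
    | m+1, hm =>
      have hk : k ≤ m := by omega
      have habs : (1 - q^(k+1)) * G (m+1) (k+1) = (1 - q^(m+1)) * G m k := by
        have := absorb m k
        have : -((q ^ (k+1) - 1) * G (m+1) (k+1)) = -((q ^ (m+1) - 1) * G m k) := by rw [this]
        linear_combination this
      rw [prod_range_succ]
      calc G (m+1) (k+1) * (( ∏ i ∈ range k, (1 - q ^ (i+1))) * (1 - q^(k+1)))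
          = ((1 - q^(k+1)) * G (m+1) (k+1)) * ∏ i ∈ range k, (1 - q ^ (i+1)) := by ring
        _ = (1 - q^(m+1)) * (G m k * ∏ i ∈ range k, (1 - q ^ (i+1))) := by rw [habs]; ring
        _ = (1 - q^(m+1)) * ∏ i ∈ range k, (1 - q ^ (m - k + i + 1)) := by rw [ih m hk]
        _ = ∏ i ∈ range (k+1), (1 - q ^ (m + 1 - (k+1) + i + 1)) := by
              rw [prod_range_succ]
              have h1 : m + 1 - (k+1) + k + 1 = m + 1 := by omega
              have h2 : ∀ i, m - k + i + 1 = m + 1 - (k+1) + i + 1 := by intro i; omega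
              rw [h1]
              rw [Finset.prod_congr rfl (fun i _ => by rw [h2 i])]
              ring

noncomputable def E (n k : ℕ) : ℕ := (((k:ℤ) - n) * ((k:ℤ) - n - 1) / 2).toNat

lemma E_two (n k : ℕ) : (E n k : ℤ) * 2 = ((k:ℤ) - n) * ((k:ℤ) - n - 1) := by
  have hev : (2:ℤ) ∣ ((k:ℤ) - n) * ((k:ℤ) - n - 1) := by
    rcases Int.even_or_odd ((k:ℤ) - n) with ⟨c, hc⟩ | ⟨c, hc⟩
    · exact Dvd.dvd.mul_right ⟨c, by omega⟩ _
    · exact Dvd.dvd.mul_left ⟨c, by omega⟩ _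
  have hnn : 0 ≤ ((k:ℤ) - n) * ((k:ℤ) - n - 1) := by
    rcases le_or_gt ((k:ℤ) - n) 0 with h | h
    · nlinarith
    · exact mul_nonneg (by omega) (by omega)
  unfold E
  rw [Int.toNat_of_nonneg (Int.ediv_nonneg hnn (by norm_num))]
  exact Int.ediv_mul_cancel hev

lemma E_succ_succ (n k : ℕ) : E (n+1) (k+1) = E n k := by
  unfold E
  congr 1
  push_cast
  ring_nf

lemma Ei (n k : ℕ) : E (n+1) k + k = (n+1) + E n k := by
  have h1 := E_two (n+1) k
  have h2 := E_two n k
  have key : ((k:ℤ) - (n+1)) * ((k:ℤ) - (n+1) - 1) + 2*k = 2*(n+1) + ((k:ℤ) - n) * ((k:ℤ) - n - 1) := by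
    ring
  have : (E (n+1) k : ℤ) + k = (n+1) + E n k := by push_cast at h1 h2 ⊢; linarith
  exact_mod_cast this

lemma Eii (n k : ℕ) (h : k ≤ 2*n+1) : n + E (n+1) k = E (n+1) (k+1) + (2*n+1-k) := by
  have h1 := E_two (n+1) k
  have h2 := E_two (n+1) (k+1)
  have key : (2:ℤ)*n + ((k:ℤ) - (n+1)) * ((k:ℤ) - (n+1) - 1)
      = (((k:ℤ)+1) - (n+1)) * (((k:ℤ)+1) - (n+1) - 1) + 2*((2*n:ℤ)+1-k) := by ring
  have : (n:ℤ) + E (n+1) k = E (n+1) (k+1) + ((2*n+1:ℤ)-k) := by push_cast at h1 h2 ⊢; linarith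
  omega

lemma E_high (n m : ℕ) : E n (n+1+m) = m*(m+1)/2 := by
  have h1 := E_two n (n+1+m)
  have hT : 2 * (m*(m+1)/2) = m*(m+1) := Nat.two_mul_div_two_of_even (Nat.even_mul_succ_self m)
  have key : (((n:ℤ)+1+m) - n) * (((n:ℤ)+1+m) - n - 1) = m*(m+1) := by ring
  have : (E n (n+1+m) : ℤ) * 2 = (m*(m+1) : ℕ) := by push_cast at h1 ⊢; linarith
  omega

lemma E_low (n m : ℕ) (h : m ≤ n) : E n (n-m) = m*(m+1)/2 := by
  have h1 := E_two n (n-m)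
  have hT : 2 * (m*(m+1)/2) = m*(m+1) := Nat.two_mul_div_two_of_even (Nat.even_mul_succ_self m)
  have hc : ((n-m : ℕ) : ℤ) = (n:ℤ) - m := by omega
  rw [hc] at h1
  have key : (((n:ℤ)-m) - n) * (((n:ℤ)-m) - n - 1) = m*(m+1) := by ring
  have : (E n (n-m) : ℤ) * 2 = (m*(m+1) : ℕ) := by push_cast at h1 ⊢; linarith
  omega

lemma E_bound (D k : ℕ) (hD : 1 ≤ D) (hE : E (2*D+2) k < D) : D ≤ k ∧ k + D ≤ 2*(2*D+2) := by
  set n : ℕ := 2*D+2 with hn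
  have h1 := E_two n k
  have hEl : (E n k : ℤ) < D := by exact_mod_cast hE
  have hub : (k:ℤ) - n ≤ D + 1 := by
    by_contra hcon
    push_neg at hcon
    nlinarith
  have hlb : (n:ℤ) - k ≤ D - 1 := by
    by_contra hcon
    push_neg at hcon
    nlinarith
  omega

lemma stab (D : ℕ) (hD : 1 ≤ D) : ∀ m k, D ≤ k → k + D ≤ m → q^D ∣ G m k - G (2*D) D := by
  intro m
  induction m using Nat.strong_induction_on with
  | _ m ih =>
    intro k hk hkm
    rcases Nat.lt_or_ge (2*D) m with hlt | hge
    · obtain ⟨m, rfl⟩ : ∃ m', m = m'+1 := ⟨m-1, by omega⟩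
      obtain ⟨k, rfl⟩ : ∃ k', k = k'+1 := ⟨k-1, by omega⟩
      by_cases hc : (k+1) + D ≤ m
      · rw [ruleA m k]
        have h1 : q^D ∣ q ^ (m-k) * G m k :=
          Dvd.dvd.mul_right (pow_dvd_pow q (by omega)) _
        have h2 := ih m (by omega) (k+1) hk hc
        have hrw : G m (k+1) + q ^ (m-k) * G m k - G (2*D) D
            = (G m (k+1) - G (2*D) D) + q ^ (m-k) * G m k := by ring
        rw [hrw]
        exact dvd_add h2 h1
      · rw [ruleB m k]
        have hkD : D ≤ k := by omega
        have h1 : q^D ∣ q ^ (k+1) * G m (k+1) :=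
          Dvd.dvd.mul_right (pow_dvd_pow q (by omega)) _
        have h2 := ih m (by omega) k hkD (by omega)
        have hrw : q ^ (k+1) * G m (k+1) + G m k - G (2*D) D
            = q ^ (k+1) * G m (k+1) + (G m k - G (2*D) D) := by ring
        rw [hrw]
        exact dvd_add h1 h2
    · have hk' : k = D := by omega
      have hm' : m = 2*D := by omega
      rw [hk', hm', sub_self]
      exact dvd_zero _

lemma mul_linear (M : ℕ) (f g : ℕ → PowerSeries ℤ) (u v : PowerSeries ℤ)
    (hf : f (M+1) = 0) (h0 : g 0 = v * f 0)
    (hs : ∀ k ≤ M, g (k+1) = u * f k + v * f (k+1)) :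
    (∑ k ∈ range (M+1), Polynomial.C (f k) * Polynomial.X ^ k) * (Polynomial.C u * Polynomial.X + Polynomial.C v)
      = ∑ k ∈ range (M+2), Polynomial.C (g k) * Polynomial.X ^ k := by
  rw [mul_add, Finset.sum_mul, Finset.sum_mul]
  rw [Finset.sum_range_succ' (fun k => Polynomial.C (g k) * Polynomial.X ^ k) (M+1)]
  have e1 : ∀ k ∈ range (M+1),
      Polynomial.C (f k) * Polynomial.X ^ k * (Polynomial.C u * Polynomial.X)
        = Polynomial.C (u * f k) * Polynomial.X ^ (k+1) := by
    intro k _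
    rw [map_mul, pow_succ]
    ring
  rw [Finset.sum_congr rfl e1]
  have e2 : ∀ k ∈ range (M+1),
      Polynomial.C (g (k+1)) * Polynomial.X ^ (k+1)
        = Polynomial.C (u * f k) * Polynomial.X ^ (k+1) + Polynomial.C (v * f (k+1)) * Polynomial.X ^ (k+1) := by
    intro k hk
    rw [hs k (by simpa using Nat.lt_succ_iff.mp (mem_range.mp hk)), map_add, add_mul]
  rw [Finset.sum_congr rfl e2, Finset.sum_add_distrib]
  have e3 : ∀ k ∈ range (M+1),
      Polynomial.C (f k) * Polynomial.X ^ k * Polynomial.C v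
        = Polynomial.C (v * f k) * Polynomial.X ^ k := by
    intro k _; rw [map_mul]; ring
  rw [Finset.sum_congr rfl e3]
  have e4 : ∑ k ∈ range (M+1), Polynomial.C (v * f k) * Polynomial.X ^ k
      = (∑ k ∈ range (M+1), Polynomial.C (v * f (k+1)) * Polynomial.X ^ (k+1)) + Polynomial.C (g 0) * Polynomial.X ^ 0 := by
    rw [h0, ← Finset.sum_range_succ' (fun k => Polynomial.C (v * f k) * Polynomial.X ^ k) (M+1)]
    rw [Finset.sum_range_succ (fun k => Polynomial.C (v * f k) * Polynomial.X ^ k) (M+1)]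
    rw [hf, mul_zero, map_zero, zero_mul, add_zero]
  rw [e4]
  ring

lemma main_id (n : ℕ) :
    (∏ t ∈ range n, (Polynomial.X + Polynomial.C (q^(t+1))))
      * (∏ s ∈ range n, (Polynomial.C (q^s) * Polynomial.X + 1))
    = ∑ k ∈ range (2*n+1), Polynomial.C (q^(E n k) * G (2*n) k) * Polynomial.X ^ k := by
  induction n with
  | zero =>
    simp [E, G]
  | succ n ih =>
    rw [prod_range_succ, prod_range_succ]
    have rearr : (∏ t ∈ range n, (Polynomial.X + Polynomial.C (q^(t+1)))) * (Polynomial.X + Polynomial.C (q^(n+1)))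
        * ((∏ s ∈ range n, (Polynomial.C (q^s) * Polynomial.X + 1)) * (Polynomial.C (q^n) * Polynomial.X + 1))
        = (((∏ t ∈ range n, (Polynomial.X + Polynomial.C (q^(t+1))))
            * (∏ s ∈ range n, (Polynomial.C (q^s) * Polynomial.X + 1)))
           * (Polynomial.C 1 * Polynomial.X + Polynomial.C (q^(n+1))))
          * (Polynomial.C (q^n) * Polynomial.X + Polynomial.C 1) := by
      simp only [map_one, one_mul]
      ring
    rw [rearr, ih]
    -- step 1
    have step1 : (∑ k ∈ range (2*n+1), Polynomial.C (q^(E n k) * G (2*n) k) * Polynomial.X ^ k)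
        * (Polynomial.C 1 * Polynomial.X + Polynomial.C (q^(n+1)))
        = ∑ k ∈ range (2*n+2), Polynomial.C (q^(E (n+1) k) * G (2*n+1) k) * Polynomial.X ^ k := by
      apply mul_linear (2*n) (fun k => q^(E n k) * G (2*n) k) (fun k => q^(E (n+1) k) * G (2*n+1) k)
      · rw [G_eq_zero (2*n) (2*n+1) (by omega), mul_zero]
      · rw [G_zero, G_zero, mul_one, mul_one, ← pow_add]
        congr 1
        have := Ei n 0
        omega
      · intro k _
        rw [ruleB (2*n) k]
        have e1 : E (n+1) (k+1) = E n k := E_succ_succ n k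
        have e2 : E (n+1) (k+1) + (k+1) = (n+1) + E n (k+1) := Ei n (k+1)
        calc q^(E (n+1) (k+1)) * (q ^ (k+1) * G (2*n) (k+1) + G (2*n) k)
            = q^(E (n+1) (k+1) + (k+1)) * G (2*n) (k+1) + q^(E (n+1) (k+1)) * G (2*n) k := by
              rw [pow_add]; ring
          _ = q^((n+1) + E n (k+1)) * G (2*n) (k+1) + q^(E n k) * G (2*n) k := by rw [e2, e1]
          _ = 1 * (q^(E n k) * G (2*n) k) + q^(n+1) * (q^(E n (k+1)) * G (2*n) (k+1)) := by
              rw [pow_add]; ring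
    rw [step1]
    -- step 2
    have step2 : (∑ k ∈ range (2*n+2), Polynomial.C (q^(E (n+1) k) * G (2*n+1) k) * Polynomial.X ^ k)
        * (Polynomial.C (q^n) * Polynomial.X + Polynomial.C 1)
        = ∑ k ∈ range (2*n+3), Polynomial.C (q^(E (n+1) k) * G (2*n+2) k) * Polynomial.X ^ k := by
      apply mul_linear (2*n+1) (fun k => q^(E (n+1) k) * G (2*n+1) k) (fun k => q^(E (n+1) k) * G (2*n+2) k)
      · rw [G_eq_zero (2*n+1) (2*n+2) (by omega), mul_zero]
      · rw [G_zero, G_zero, one_mul]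
      · intro k hk
        rw [ruleA (2*n+1) k]
        have e2 : n + E (n+1) k = E (n+1) (k+1) + (2*n+1-k) := Eii n k hk
        calc q^(E (n+1) (k+1)) * (G (2*n+1) (k+1) + q ^ (2*n+1-k) * G (2*n+1) k)
            = q^(E (n+1) (k+1) + (2*n+1-k)) * G (2*n+1) k + q^(E (n+1) (k+1)) * G (2*n+1) (k+1) := by
              rw [pow_add]; ring
          _ = q^(n + E (n+1) k) * G (2*n+1) k + q^(E (n+1) (k+1)) * G (2*n+1) (k+1) := by rw [← e2]
          _ = q^n * (q^(E (n+1) k) * G (2*n+1) k) + 1 * (q^(E (n+1) (k+1)) * G (2*n+1) (k+1)) := by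
              rw [pow_add]; ring
    rw [step2]
    have h23 : 2*(n+1)+1 = 2*n+3 := by omega
    have h22 : 2*(n+1) = 2*n+2 := by omega
    rw [h23, h22]

lemma evalder (n : ℕ) (hn : 1 ≤ n) :
    ∑ k ∈ range (2*n+1), (k : PowerSeries ℤ) * (-1)^(k+1) * (q^(E n k) * G (2*n) k)
      = (-1)^n * (∏ t ∈ range n, (1 - q^(t+1))) * (∏ s ∈ range (n-1), (1 - q^(s+1))) := by
  have H := main_id n
  obtain ⟨n', rfl⟩ : ∃ n'', n = n''+1 := ⟨n-1, by omega⟩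
  have hU : (∏ t ∈ range (n'+1), (Polynomial.X + Polynomial.C (q^(t+1))))
      * (∏ s ∈ range (n'+1), (Polynomial.C (q^s) * Polynomial.X + 1))
      = ((∏ t ∈ range (n'+1), (Polynomial.X + Polynomial.C (q^(t+1))))
          * (∏ s ∈ range n', (Polynomial.C (q^(s+1)) * Polynomial.X + 1))) * (Polynomial.X + 1) := by
    rw [Finset.prod_range_succ' (fun s => Polynomial.C (q^s) * Polynomial.X + 1) n']
    simp only [pow_zero, map_one, one_mul]
    ring
  rw [hU] at H
  have HD := congrArg (fun p => Polynomial.eval (-1 : PowerSeries ℤ) (Polynomial.derivative p)) H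
  set W := (∏ t ∈ range (n'+1), (Polynomial.X + Polynomial.C (q^(t+1))))
          * (∏ s ∈ range n', (Polynomial.C (q^(s+1)) * Polynomial.X + 1)) with hW
  -- LHS of HD
  have hL : Polynomial.eval (-1 : PowerSeries ℤ) (Polynomial.derivative (W * (Polynomial.X + 1)))
      = Polynomial.eval (-1 : PowerSeries ℤ) W := by
    rw [Polynomial.derivative_mul]
    simp [Polynomial.eval_mul, Polynomial.eval_add]
  rw [hL] at HD
  have hWe : Polynomial.eval (-1 : PowerSeries ℤ) W
      = (-1)^(n'+1) * (∏ t ∈ range (n'+1), (1 - q^(t+1))) * (∏ s ∈ range n', (1 - q^(s+1))) := by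
    rw [hW]
    rw [Polynomial.eval_mul, Polynomial.eval_prod, Polynomial.eval_prod]
    simp only [Polynomial.eval_add, Polynomial.eval_mul, Polynomial.eval_X, Polynomial.eval_C,
      Polynomial.eval_one]
    have e1 : ∀ t ∈ range (n'+1), (-1 : PowerSeries ℤ) + q^(t+1) = (-1) * (1 - q^(t+1)) := by
      intro t _; ring
    rw [Finset.prod_congr rfl e1, Finset.prod_mul_distrib, Finset.prod_const]
    have e2 : ∀ s ∈ range n', q^(s+1) * (-1 : PowerSeries ℤ) + 1 = 1 - q^(s+1) := by
      intro s _; ring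
    rw [Finset.prod_congr rfl e2]
    simp only [card_range]
    try ring
  rw [hWe] at HD
  -- RHS of HD
  have hR : Polynomial.eval (-1 : PowerSeries ℤ) (Polynomial.derivative
      (∑ k ∈ range (2*(n'+1)+1), Polynomial.C (q^(E (n'+1) k) * G (2*(n'+1)) k) * Polynomial.X ^ k))
      = ∑ k ∈ range (2*(n'+1)+1), (k : PowerSeries ℤ) * (-1)^(k+1) * (q^(E (n'+1) k) * G (2*(n'+1)) k) := by
    rw [map_sum, Polynomial.eval_finset_sum]
    apply Finset.sum_congr rfl
    intro k _
    rw [Polynomial.derivative_C_mul, Polynomial.derivative_X_pow]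
    rw [Polynomial.eval_mul, Polynomial.eval_C, Polynomial.eval_mul, Polynomial.eval_C,
      Polynomial.eval_pow, Polynomial.eval_X]
    cases k with
    | zero => simp
    | succ k =>
      have : (k+1) - 1 = k := rfl
      rw [this]
      have hs : (-1 : PowerSeries ℤ)^(k+1+1) = (-1)^k := by
        rw [pow_succ, pow_succ]; ring
      rw [hs]
      ring
  rw [hR] at HD
  rw [Nat.add_sub_cancel]
  exact HD.symm

lemma pairing (n : ℕ) :
    ∑ k ∈ range (2*n+1), (k : PowerSeries ℤ) * (-1)^(k+1) * q^(E n k)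
      = (-1)^n * ∑ m ∈ range n, ((-1)^m * (2*(m : PowerSeries ℤ)+1) * q^(m*(m+1)/2)) := by
  set f : ℕ → PowerSeries ℤ := fun k => (k : PowerSeries ℤ) * (-1)^(k+1) * q^(E n k) with hf
  have h0 : ∑ k ∈ range (2*n+1), f k = ∑ k ∈ range (2*n), f (k+1) := by
    rw [Finset.sum_range_succ' f (2*n)]
    simp [hf]
  have hsplit : ∑ k ∈ range (2*n), f (k+1)
      = (∑ k ∈ range n, f (k+1)) + ∑ k ∈ range n, f (n+k+1) := by
    have := Finset.sum_range_add_sum_Ico (fun k => f (k+1)) (show n ≤ 2*n by omega)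
    rw [← this]
    congr 1
    rw [Finset.sum_Ico_eq_sum_range]
    have : 2*n - n = n := by omega
    rw [this]
  have hrefl : ∑ k ∈ range n, f (k+1) = ∑ m ∈ range n, f (n - m) := by
    rw [← Finset.sum_range_reflect (fun k => f (k+1)) n]
    apply Finset.sum_congr rfl
    intro m hm
    have : n - 1 - m + 1 = n - m := by
      have := mem_range.mp hm; omega
    rw [this]
  rw [h0, hsplit, hrefl, ← Finset.sum_add_distrib, Finset.mul_sum]
  apply Finset.sum_congr rfl
  intro m hm
  have hmn : m < n := mem_range.mp hm
  have hElow : E n (n - m) = m*(m+1)/2 := E_low n m (by omega)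
  have hEhigh : E n (n+m+1) = m*(m+1)/2 := by
    have : n+m+1 = n+1+m := by omega
    rw [this]; exact E_high n m
  rw [hf]
  simp only
  rw [hElow, hEhigh]
  have hcast : ((n - m : ℕ) : PowerSeries ℤ) = (n : PowerSeries ℤ) - m := by
    have : ((n - m : ℕ) : ℤ) = (n : ℤ) - m := by omega
    have h2 : ((n - m : ℕ) : PowerSeries ℤ) = ((((n:ℤ) - m) : ℤ) : PowerSeries ℤ) := by
      exact_mod_cast congrArg (fun z : ℤ => (z : PowerSeries ℤ)) this
    rw [h2]
    push_cast
    ring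
  rw [hcast]
  have hsign : (-1 : PowerSeries ℤ)^(n - m + 1) = (-1)^(n+m+1) := by
    have h2 : n - m + 1 + 2*m = n + m + 1 := by omega
    calc (-1 : PowerSeries ℤ)^(n - m + 1) = (-1)^(n-m+1) * ((-1)^2)^m := by norm_num
      _ = (-1)^(n-m+1+2*m) := by rw [← pow_mul, ← pow_add]
      _ = (-1)^(n+m+1) := by rw [h2]
  rw [hsign]
  have hsign2 : (-1 : PowerSeries ℤ)^(n+m+1+1) = (-1)^n * (-1)^m := by
    have : n+m+1+1 = (n+m)+2 := by omega
    rw [this, pow_add, pow_add]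
    norm_num
  have hsign3 : (-1 : PowerSeries ℤ)^(n+m+1) = -((-1)^n * (-1)^m) := by
    rw [pow_succ, pow_add]
    ring
  rw [hsign2, hsign3]
  push_cast
  ring

lemma dvd_mul_sub_mul' {r a b c d : PowerSeries ℤ} (h1 : r ∣ a - b) (h2 : r ∣ c - d) :
    r ∣ a*c - b*d := by
  obtain ⟨w1, hw1⟩ := h1
  obtain ⟨w2, hw2⟩ := h2
  exact ⟨w1 * c + b * w2, by linear_combination c * hw1 + b * hw2⟩

lemma prod_one_cong (D : ℕ) {ι : Type} (s : Finset ι) (f : ι → PowerSeries ℤ)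
    (h : ∀ i ∈ s, q^D ∣ f i - 1) : q^D ∣ (∏ i ∈ s, f i) - 1 := by
  induction s using Finset.cons_induction with
  | empty => simp
  | cons a s ha ih =>
    rw [Finset.prod_cons]
    have h1 : q^D ∣ f a - 1 := h a (Finset.mem_cons_self a s)
    have h2 : q^D ∣ (∏ i ∈ s, f i) - 1 := ih (fun i hi => h i (Finset.mem_cons_of_mem hi))
    have := dvd_mul_sub_mul' h1 h2
    simpa using this

noncomputable def P (r : ℕ) : PowerSeries ℤ := ∏ i ∈ range r, (1 - q^(i+1))

lemma P_tail_cong (c r : ℕ) (h : c ≤ r) : q^c ∣ P r - P c := by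
  have hsplit : P c * (∏ i ∈ Ico c r, (1 - q^(i+1))) = P r := by
    rw [P, P, ← Finset.prod_range_mul_prod_Ico _ h]
  have hc : q^c ∣ (∏ i ∈ Ico c r, (1 - q^(i+1))) - 1 := by
    apply prod_one_cong
    intro i hi
    have : (1 : PowerSeries ℤ) - q^(i+1) - 1 = -(q^(i+1)) := by ring
    rw [this]
    exact dvd_neg.mpr (pow_dvd_pow q (by have := (mem_Ico.mp hi).1; omega))
  obtain ⟨w, hw⟩ := hc
  exact ⟨P c * w, by linear_combination (P c) * hw - hsplit⟩

lemma g_inv (D : ℕ) (hD : 1 ≤ D) : q^D ∣ G (2*D) D * P D - 1 := by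
  have hpg := prodG D (2*D) (by omega)
  rw [← P] at hpg
  rw [hpg]
  apply prod_one_cong
  intro i _
  have : (1 : PowerSeries ℤ) - q^(2*D - D + i + 1) - 1 = -(q^(2*D - D + i + 1)) := by ring
  rw [this]
  exact dvd_neg.mpr (pow_dvd_pow q (by omega))

lemma key1 (D : ℕ) (hD : 1 ≤ D) :
    q^D ∣ (∑ k ∈ range (2*(2*D+2)+1), (k : PowerSeries ℤ) * (-1)^(k+1) * (q^(E (2*D+2) k) * G (2*(2*D+2)) k))
      - G (2*D) D * ∑ k ∈ range (2*(2*D+2)+1), (k : PowerSeries ℤ) * (-1)^(k+1) * q^(E (2*D+2) k) := by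
  rw [Finset.mul_sum, ← Finset.sum_sub_distrib]
  apply Finset.dvd_sum
  intro k _
  have hrw : (k : PowerSeries ℤ) * (-1)^(k+1) * (q^(E (2*D+2) k) * G (2*(2*D+2)) k)
      - G (2*D) D * ((k : PowerSeries ℤ) * (-1)^(k+1) * q^(E (2*D+2) k))
      = ((k : PowerSeries ℤ) * (-1)^(k+1)) * (q^(E (2*D+2) k) * (G (2*(2*D+2)) k - G (2*D) D)) := by
    ring
  rw [hrw]
  apply Dvd.dvd.mul_left
  by_cases hE : D ≤ E (2*D+2) k
  · exact Dvd.dvd.mul_right (pow_dvd_pow q hE) _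
  · have hb := E_bound D k hD (by omega)
    exact Dvd.dvd.mul_left (stab D hD (2*(2*D+2)) k hb.1 hb.2) _

lemma cubeP (D : ℕ) (hD : 1 ≤ D) :
    q^D ∣ (P D)^3 - ∑ m ∈ range (2*D+2), ((-1)^m * (2*(m : PowerSeries ℤ)+1) * q^(m*(m+1)/2)) := by
  set n := 2*D+2 with hn
  set J := ∑ m ∈ range n, ((-1 : PowerSeries ℤ)^m * (2*(m : PowerSeries ℤ)+1) * q^(m*(m+1)/2)) with hJ
  set g := G (2*D) D with hg
  have hev := evalder n (by omega)
  have hp := pairing n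
  have c1 : q^D ∣ (-1)^n * (P n) * (P (n-1)) - g * ((-1)^n * J) := by
    have := key1 D hD
    rw [hev, hp] at this
    exact this
  have hu : ((-1 : PowerSeries ℤ)^n) * ((-1 : PowerSeries ℤ)^n) = 1 := by
    rw [← pow_add]
    have : n + n = 2*n := by omega
    rw [this, pow_mul]
    norm_num
  have c2 : q^D ∣ P n * P (n-1) - g * J := by
    obtain ⟨w, hw⟩ := c1
    refine ⟨(-1)^n * w, ?_⟩
    linear_combination ((-1 : PowerSeries ℤ)^n) * hw - (P n * P (n-1) - g * J) * hu
  have c3 : q^D ∣ P D * P D - P n * P (n-1) :=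
    dvd_mul_sub_mul' (dvd_sub_comm.mp (P_tail_cong D n (by omega)))
      (dvd_sub_comm.mp (P_tail_cong D (n-1) (by omega)))
  have c4 : q^D ∣ P D * P D - g * J := by
    have := dvd_add c3 c2
    simpa using this
  have c5 : q^D ∣ (P D)^3 - (g * P D) * J := by
    have h := Dvd.dvd.mul_left c4 (P D)
    have hrw : P D * (P D * P D - g * J) = (P D)^3 - (g * P D) * J := by ring
    rw [hrw] at h
    exact h
  have c6 : q^D ∣ (g * P D) * J - J := by
    obtain ⟨w, hw⟩ := g_inv D hD
    exact ⟨w * J, by linear_combination J * hw⟩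
  have := dvd_add c5 c6
  simpa using this

lemma qX : q = PowerSeries.X := rfl

lemma fps_coeff_eq (i : ℕ) : PowerSeries.coeff (R := ℤ) i (fps 1) = PowerSeries.coeff (R := ℤ) i (P (i+1)) := by
  rw [fps, PowerSeries.coeff_mk]
  congr 1
  rw [P]
  apply Finset.prod_congr rfl
  intro t _
  rw [one_mul, qX]

lemma fps_cong (D : ℕ) (hD : 1 ≤ D) : q^D ∣ fps 1 - P D := by
  rw [qX, PowerSeries.X_pow_dvd_iff]
  intro i hi
  rw [map_sub, sub_eq_zero, fps_coeff_eq i]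
  have h2 := P_tail_cong (i+1) D (by omega)
  rw [qX, PowerSeries.X_pow_dvd_iff] at h2
  have h3 := h2 i (by omega)
  rw [map_sub, sub_eq_zero] at h3
  exact h3.symm

lemma final_dvd (D : ℕ) (hD : 1 ≤ D) :
    q^D ∣ fps 1 ^ 3 - ∑ m ∈ range (2*D+2), ((-1)^m * (2*(m : PowerSeries ℤ)+1) * q^(m*(m+1)/2)) := by
  have h1 := cubeP D hD
  have h2 := fps_cong D hD
  have h3 : q^D ∣ fps 1 ^ 3 - (P D)^3 := by
    obtain ⟨w, hw⟩ := h2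
    exact ⟨w * (fps 1 ^2 + fps 1 * P D + (P D)^2),
      by linear_combination (fps 1 ^2 + fps 1 * P D + (P D)^2) * hw⟩
  have := dvd_add h3 h1
  simpa using this

end Jac

theorem stmt17 (N : ℕ) :
    PowerSeries.coeff (R := ℤ) N (fps 1 ^ 3) =
      ∑ m ∈ Finset.range (N + 1),
        if m * (m + 1) / 2 = N then (-1 : ℤ) ^ m * (2 * m + 1) else 0 := by
  have hD : 1 ≤ N + 1 := by omega
  have h := Jac.final_dvd (N+1) hD
  rw [Jac.qX, PowerSeries.X_pow_dvd_iff] at h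
  have h2 := h N (by omega)
  rw [map_sub, sub_eq_zero] at h2
  rw [h2]
  -- compute the coefficient of the sum
  have hC : ∀ m : ℕ, ((-1 : PowerSeries ℤ)^m * (2*(m : PowerSeries ℤ)+1) * PowerSeries.X^(m*(m+1)/2))
      = (PowerSeries.C (R := ℤ)) ((-1 : ℤ)^m * (2*m+1)) * PowerSeries.X ^ (m*(m+1)/2) := by
    intro m
    rw [map_mul, map_pow, map_neg, map_one, map_add, map_mul, map_natCast]
    norm_num
  rw [map_sum]
  have hterm : ∀ m ∈ Finset.range (2*(N+1)+2),
      PowerSeries.coeff (R := ℤ) N ((-1 : PowerSeries ℤ)^m * (2*(m : PowerSeries ℤ)+1) * PowerSeries.X^(m*(m+1)/2))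
        = if m*(m+1)/2 = N then (-1 : ℤ)^m * (2*m+1) else 0 := by
    intro m _
    rw [hC m, PowerSeries.coeff_C_mul, PowerSeries.coeff_X_pow]
    by_cases hc : m*(m+1)/2 = N
    · rw [if_pos hc, if_pos hc.symm, mul_one]
    · rw [if_neg hc, if_neg (fun hh => hc hh.symm), mul_zero]
  rw [Finset.sum_congr rfl hterm]
  rw [← Finset.sum_range_add_sum_Ico _ (show N+1 ≤ 2*(N+1)+2 by omega)]
  have hzero : ∑ m ∈ Finset.Ico (N+1) (2*(N+1)+2),
      (if m*(m+1)/2 = N then (-1 : ℤ)^m * (2*m+1) else 0) = 0 := by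
    apply Finset.sum_eq_zero
    intro m hm
    have hm1 : N + 1 ≤ m := (Finset.mem_Ico.mp hm).1
    have hTm : m ≤ m*(m+1)/2 := by
      rw [Nat.le_div_iff_mul_le (by norm_num)]
      nlinarith
    rw [if_neg (by omega)]
  rw [hzero, add_zero]
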